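/- arXiv:1511.03126 — 2 statements merged into one kernel-verified Lean document; each statement's English description precedes it below -/
import Mathlib

section
/- Let κ ∈ ℂ with Im κ > 0 and let β₀ solve i β₀'(t) = (κ/t)|β₀|²β₀ with β₀(1) = ε θ₀ for θ₀ ∈ ℂ, θ₀ ≠ 0, ε > 0. Set τ₁ = 1/(2ε²|θ₀|² Im κ). Then |β₀(t)| → ∞ as t → exp(τ₁) from below, i.e. for every M > 0 there exists t < exp(τ₁) with |β₀(t)| > M. -/
/-- blow-up of the unperturbed solution as `t → exp(τ₁)` when
`Im κ > 0`, where `τ₁ = 1/(2ε²|θ₀|² Im κ)`. -/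
theorem stmt3 (κ : ℂ) (hκ : 0 < κ.im) (θ₀ : ℂ) (hθ : θ₀ ≠ 0) (ε : ℝ) (hε : 0 < ε)
    (τ₁ : ℝ) (hτ : τ₁ = 1 / (2 * ε^2 * ‖θ₀‖^2 * κ.im))
    (β₀ : ℝ → ℂ)
    (hode : ∀ t ∈ Set.Ico (1 : ℝ) (Real.exp τ₁),
      HasDerivAt β₀ (-Complex.I * (κ / (t : ℂ)) * ((‖β₀ t‖ : ℝ) : ℂ)^2 * β₀ t) t)
    (hinit : β₀ 1 = (ε : ℂ) * θ₀) :
    ∀ M : ℝ, 0 < M → ∃ t : ℝ, 1 ≤ t ∧ t < Real.exp τ₁ ∧ M < ‖β₀ t‖ := by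
  intro M hM
  set T := Real.exp τ₁ with hT
  have hθ' : 0 < ‖θ₀‖ := norm_pos_iff.mpr hθ
  have hc : 0 < 2 * κ.im := by linarith
  set c := 2 * κ.im with hcdef
  set u : ℝ → ℝ := fun s => ‖β₀ s‖ ^ 2 with hudef
  have hu1 : u 1 = ε ^ 2 * ‖θ₀‖ ^ 2 := by
    simp [hudef, hinit, norm_mul, mul_pow, Complex.norm_real, Real.norm_eq_abs, abs_of_pos hε]
  have hu1pos : 0 < u 1 := by rw [hu1]; positivity
  have hτpos : 0 < τ₁ := by rw [hτ]; positivity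
  -- derivative of u
  have hderiv : ∀ t ∈ Set.Ico (1 : ℝ) T, HasDerivAt u (c / t * (u t) ^ 2) t := by
    intro t ht
    have ht0 : (0 : ℝ) < t := lt_of_lt_of_le one_pos ht.1
    have hd := hode t ht
    set d := -Complex.I * (κ / (t : ℂ)) * ((‖β₀ t‖ : ℝ) : ℂ) ^ 2 * β₀ t with hddef
    have hre : HasDerivAt (fun s => (β₀ s).re) d.re t :=
      Complex.reCLM.hasFDerivAt.comp_hasDerivAt t hd
    have him : HasDerivAt (fun s => (β₀ s).im) d.im t :=
      Complex.imCLM.hasFDerivAt.comp_hasDerivAt t hd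
    have hprod : HasDerivAt (fun s => (β₀ s).re * (β₀ s).re + (β₀ s).im * (β₀ s).im)
        ((d.re * (β₀ t).re + (β₀ t).re * d.re) + (d.im * (β₀ t).im + (β₀ t).im * d.im)) t :=
      (hre.mul hre).add (him.mul him)
    have hueq : u = fun s => (β₀ s).re * (β₀ s).re + (β₀ s).im * (β₀ s).im := by
      funext s
      simp only [hudef]
      rw [Complex.sq_norm, Complex.normSq_apply]
    rw [hueq]
    convert hprod using 1
    have habs : ((‖β₀ t‖ : ℝ) : ℂ) ^ 2 = ((((β₀ t).re * (β₀ t).re + (β₀ t).im * (β₀ t).im) : ℝ) : ℂ) := by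
      rw [← Complex.ofReal_pow, Complex.sq_norm, Complex.normSq_apply]
    have hdiv : κ / (t : ℂ) = κ * ((t⁻¹ : ℝ) : ℂ) := by
      push_cast
      field_simp
    rw [hddef, habs, hdiv]
    simp only [Complex.mul_re, Complex.mul_im, Complex.neg_re, Complex.neg_im,
      Complex.I_re, Complex.I_im, Complex.ofReal_re, Complex.ofReal_im]
    field_simp
    ring
  -- setup the target point
  set δ := min τ₁ (1 / (c * (M ^ 2 + 1))) / 2 with hδdef
  have hδpos : 0 < δ := by
    have h1 : 0 < 1 / (c * (M ^ 2 + 1)) := by positivity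
    have := lt_min hτpos h1
    rw [hδdef]
    linarith
  have hδτ : δ < τ₁ := by
    have : min τ₁ (1 / (c * (M ^ 2 + 1))) ≤ τ₁ := min_le_left _ _
    rw [hδdef]; linarith
  set t₀ := Real.exp (τ₁ - δ) with ht₀def
  have ht₀1 : 1 ≤ t₀ := Real.one_le_exp (by linarith)
  have ht₀T : t₀ < T := Real.exp_lt_exp.2 (by linarith)
  have hsub : Set.Icc (1 : ℝ) t₀ ⊆ Set.Ico (1 : ℝ) T := fun x hx =>
    ⟨hx.1, lt_of_le_of_lt hx.2 ht₀T⟩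
  have hcont : ContinuousOn u (Set.Icc (1 : ℝ) t₀) := fun x hx =>
    ((hderiv x (hsub hx)).continuousAt).continuousWithinAt
  have hmono : MonotoneOn u (Set.Icc (1 : ℝ) t₀) := by
    apply monotoneOn_of_deriv_nonneg (convex_Icc 1 t₀) hcont
    · intro x hx
      have hx' : x ∈ Set.Ico (1 : ℝ) T := hsub (interior_subset hx)
      exact ((hderiv x hx').differentiableAt).differentiableWithinAt
    · intro x hx
      have hx' : x ∈ Set.Ico (1 : ℝ) T := hsub (interior_subset hx)
      rw [(hderiv x hx').deriv]
      have hx0 : (0 : ℝ) < x := lt_of_lt_of_le one_pos hx'.1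
      exact mul_nonneg (le_of_lt (div_pos hc hx0)) (sq_nonneg _)
  have hupos : ∀ x ∈ Set.Icc (1 : ℝ) t₀, 0 < u x := fun x hx =>
    lt_of_lt_of_le hu1pos (hmono ⟨le_refl 1, ht₀1⟩ hx hx.1)
  set g : ℝ → ℝ := fun s => (u s)⁻¹ + c * Real.log s with hgdef
  have hgderiv : ∀ x ∈ Set.Ico (1 : ℝ) t₀, HasDerivWithinAt g 0 (Set.Ici x) x := by
    intro x hx
    have hx' : x ∈ Set.Icc (1 : ℝ) t₀ := ⟨hx.1, le_of_lt hx.2⟩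
    have hx0 : (0 : ℝ) < x := lt_of_lt_of_le one_pos hx.1
    have hne : u x ≠ 0 := (hupos x hx').ne'
    have h1 : HasDerivAt (fun s => (u s)⁻¹) (-(c / x * (u x) ^ 2) / (u x) ^ 2) x :=
      (hderiv x (hsub hx')).inv hne
    have h2 : HasDerivAt (fun s => c * Real.log s) (c * x⁻¹) x :=
      (Real.hasDerivAt_log hx0.ne').const_mul c
    have h3 := h1.add h2
    have hzero : -(c / x * (u x) ^ 2) / (u x) ^ 2 + c * x⁻¹ = 0 := by
      field_simp
      ring
    rw [hzero] at h3
    exact h3.hasDerivWithinAt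
  have hgcont : ContinuousOn g (Set.Icc (1 : ℝ) t₀) := by
    apply ContinuousOn.add
    · exact hcont.inv₀ fun x hx => (hupos x hx).ne'
    · apply continuousOn_const.mul
      apply Real.continuousOn_log.mono
      intro x hx
      simp only [Set.mem_compl_iff, Set.mem_singleton_iff]
      exact (lt_of_lt_of_le one_pos hx.1).ne'
  have hg := constant_of_has_deriv_right_zero hgcont hgderiv t₀ ⟨ht₀1, le_refl _⟩
  -- compute
  have hlog1 : Real.log (1 : ℝ) = 0 := Real.log_one
  have hlogt₀ : Real.log t₀ = τ₁ - δ := Real.log_exp _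
  have hcu1 : (u 1)⁻¹ = c * τ₁ := by
    rw [hu1, hτ, hcdef]
    field_simp
  have hut₀inv : (u t₀)⁻¹ = c * δ := by
    have := hg
    simp only [hgdef] at this
    rw [hlog1, hlogt₀, hcu1] at this
    linarith
  have hut₀pos : 0 < u t₀ := hupos t₀ ⟨ht₀1, le_refl _⟩
  have hut₀ : u t₀ = (c * δ)⁻¹ := by
    rw [← hut₀inv, inv_inv]
  have hcδ : c * δ ≤ 1 / (2 * (M ^ 2 + 1)) := by
    have h1 : min τ₁ (1 / (c * (M ^ 2 + 1))) ≤ 1 / (c * (M ^ 2 + 1)) := min_le_right _ _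
    have h2 : c * δ ≤ c * (1 / (c * (M ^ 2 + 1)) / 2) := by
      apply mul_le_mul_of_nonneg_left _ (le_of_lt hc)
      rw [hδdef]
      linarith
    have h3 : c * (1 / (c * (M ^ 2 + 1)) / 2) = 1 / (2 * (M ^ 2 + 1)) := by
      field_simp
    linarith
  have hMsq : M ^ 2 < u t₀ := by
    rw [hut₀]
    have hcδpos : 0 < c * δ := mul_pos hc hδpos
    have h4 : 1 / (2 * (M ^ 2 + 1)) < (M ^ 2)⁻¹ := by
      rw [one_div]
      exact inv_strictAnti₀ (by positivity) (by nlinarith)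
    have h5 : c * δ < (M ^ 2)⁻¹ := lt_of_le_of_lt hcδ h4
    calc M ^ 2 = ((M ^ 2)⁻¹)⁻¹ := by rw [inv_inv]
    _ < (c * δ)⁻¹ := by
        apply inv_strictAnti₀ hcδpos h5
  refine ⟨t₀, ht₀1, ht₀T, ?_⟩
  exact lt_of_pow_lt_pow_left₀ 2 (norm_nonneg _) hMsq
end

section
/- Let w : [1,T) → ℂ be C¹ and nonnegative constants A, B, μ > 0 be given such that d/dt |w(t)|² ≤ (2A/t)|w(t)|² + (B/t^{1+μ})|w(t)| for t ∈ (1,T). Then for all t ∈ [1,T), |w(t)| ≤ (|w(1)| + B/(2(μ + A))) t^{A}. -/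
open Set Real Filter Topology

set_option maxHeartbeats 1000000 in
/-- a Gronwall-type lemma: if `w` is C¹ on `[1,T)` and
`d/dt |w(t)|² ≤ (2A/t)|w(t)|² + (B/t^{1+μ})|w(t)|` on `(1,T)`, then
`|w(t)| ≤ (|w(1)| + B/(2(μ+A))) t^A` on `[1,T)`. -/
theorem stmt4 (T A B μ : ℝ) (hT : 1 < T) (hA : 0 ≤ A) (hB : 0 ≤ B) (hμ : 0 < μ)
    (w : ℝ → ℂ) (g : ℝ → ℝ)
    (hw : ContinuousOn w (Set.Ico (1 : ℝ) T))
    (hderiv : ∀ t ∈ Set.Ioo (1 : ℝ) T,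
      HasDerivAt (fun s => ‖w s‖^2) (g t) t)
    (hg : ∀ t ∈ Set.Ioo (1 : ℝ) T,
      g t ≤ (2 * A / t) * ‖w t‖^2
            + (B / t ^ ((1 : ℝ) + μ)) * ‖w t‖) :
    ∀ t ∈ Set.Ico (1 : ℝ) T,
      ‖w t‖ ≤ (‖w 1‖ + B / (2 * (μ + A))) * t ^ A := by
  have hμA : 0 < μ + A := by linarith
  set v : ℝ → ℝ := fun s => ‖w s‖ with hv
  have hv0 : ∀ s, 0 ≤ v s := fun s => norm_nonneg _
  intro t ht
  obtain ⟨ht1, htT⟩ := ht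
  rcases eq_or_lt_of_le ht1 with h1 | h1
  · rw [← h1, Real.one_rpow]
    have : 0 ≤ B / (2 * (μ + A)) := by positivity
    linarith
  -- main case 1 < t < T
  have htpos : (0:ℝ) < t := by linarith
  have htA : (0:ℝ) < t ^ A := Real.rpow_pos_of_pos htpos A
  have key : ∀ ε > (0:ℝ), v t ≤ (v 1 + ε + (B + ε) / (2 * (μ + A))) * t ^ A := by
    intro ε hε
    set k : ℝ := (B + ε) / (2 * (μ + A)) with hkdef
    have hk : k * (2 * (μ + A)) = B + ε := div_mul_cancel₀ _ (by positivity)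
    have hkpos : 0 < k := by positivity
    set c : ℝ := v 1 + ε with hcdef
    set ρ : ℝ → ℝ := fun s => (c + k) * s ^ A - k * s ^ (-μ) with hρdef
    set P : ℝ → ℝ := fun s => (c + k) * (A * s ^ (A - 1)) - k * (-μ * s ^ (-μ - 1)) with hPdef
    have hρd : ∀ x : ℝ, 0 < x → HasDerivAt ρ (P x) x := by
      intro x hx
      exact ((Real.hasDerivAt_rpow_const (p := A) (Or.inl hx.ne')).const_mul (c + k)).sub
        ((Real.hasDerivAt_rpow_const (p := -μ) (Or.inl hx.ne')).const_mul k)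
    have hρpos : ∀ x : ℝ, 1 ≤ x → 0 < ρ x := by
      intro x hx
      have h1 : x ^ (-μ) ≤ 1 := Real.rpow_le_one_of_one_le_of_nonpos hx (by linarith)
      have h2 : (1:ℝ) ≤ x ^ A := Real.one_le_rpow hx hA
      have h3 : 0 < x ^ (-μ) := Real.rpow_pos_of_pos (by linarith) _
      have := hv0 1
      simp only [hρdef]
      nlinarith
    have hode : ∀ x : ℝ, 0 < x →
        (2 * A / x) * (ρ x)^2 + ((B + ε) / x ^ ((1:ℝ) + μ)) * ρ x = 2 * ρ x * P x := by
      intro x hx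
      have hx' : x ≠ 0 := hx.ne'
      have hZ : x ^ μ ≠ 0 := (Real.rpow_pos_of_pos hx μ).ne'
      have e1 : x ^ (A - 1) = x ^ A / x := by rw [Real.rpow_sub hx, Real.rpow_one]
      have e2 : x ^ (-μ - 1) = (x ^ μ)⁻¹ / x := by
        rw [Real.rpow_sub hx, Real.rpow_one, Real.rpow_neg hx.le]
      have e3 : x ^ ((1:ℝ) + μ) = x * x ^ μ := by
        rw [Real.rpow_add hx, Real.rpow_one]
      have e4 : x ^ (-μ) = (x ^ μ)⁻¹ := Real.rpow_neg hx.le μ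
      simp only [hρdef, hPdef, e1, e2, e3, e4]
      rw [← hk]
      field_simp
      ring
    -- find starting point a
    set u : ℝ → ℝ := fun s => (v s)^2 with hudef
    have hucont : ContinuousOn u (Ico 1 T) :=
      ((continuous_norm.comp_continuousOn hw).pow 2)
    have hρcont1 : ContinuousAt ρ 1 := (hρd 1 one_pos).continuousAt
    have hh1 : 0 < (fun s => (ρ s)^2 - u s) 1 := by
      have hρ1 : ρ 1 = c := by
        simp only [hρdef, Real.one_rpow]; ring
      simp only [hρ1, hudef, hcdef]
      have := hv0 1
      nlinarith
    have hsub : Ioo (1:ℝ) t ⊆ Ico 1 T := fun x hx => ⟨hx.1.le, lt_trans hx.2 htT⟩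
    have hne : (𝓝[Ioo (1:ℝ) t] 1).NeBot := left_nhdsWithin_Ioo_neBot h1
    have htend : ContinuousWithinAt (fun s => (ρ s)^2 - u s) (Ioo (1:ℝ) t) 1 := by
      apply ContinuousWithinAt.sub
      · exact (hρcont1.pow 2).continuousWithinAt
      · exact (hucont 1 ⟨le_refl _, hT⟩).mono hsub
    have hev : ∀ᶠ s in 𝓝[Ioo (1:ℝ) t] 1, 0 < (ρ s)^2 - u s :=
      htend.eventually (eventually_gt_nhds hh1)
    obtain ⟨a, hapos, ha⟩ := (hev.and self_mem_nhdsWithin).exists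
    obtain ⟨ha1, hat⟩ := ha
    -- apply comparison on [a, t]
    have hIcc : Icc a t ⊆ Ico 1 T := fun x hx => ⟨ha1.le.trans hx.1, lt_of_le_of_lt hx.2 htT⟩
    have hstep : ∀ ⦃x⦄, x ∈ Icc a t → u x ≤ (ρ x)^2 := by
      refine image_le_of_deriv_right_lt_deriv_boundary'
        (f' := g) (B := fun x => (ρ x)^2) (B' := fun x => 2 * ρ x * P x) ?_ ?_ ?_ ?_ ?_ ?_
      · exact hucont.mono hIcc
      · intro x hx
        have hx' : x ∈ Ioo (1:ℝ) T := ⟨lt_of_lt_of_le ha1 hx.1, lt_trans hx.2 htT⟩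
        exact (hderiv x hx').hasDerivWithinAt
      · show u a ≤ (ρ a)^2
        linarith
      · intro x hx
        have hx0 : 0 < x := by have := ha1.le.trans hx.1; linarith
        exact (((hρd x hx0).pow 2).continuousAt).continuousWithinAt
      · intro x hx
        have hx0 : 0 < x := by have := ha1.le.trans hx.1; linarith
        have h : HasDerivWithinAt (fun y => (ρ y)^2) (((2:ℕ):ℝ) * ρ x ^ (2 - 1) * P x) (Ici x) x :=
          ((hρd x hx0).pow 2).hasDerivWithinAt (s := Ici x)
        convert h using 1
        simp
      · intro x hx heq
        have hx' : x ∈ Ioo (1:ℝ) T := ⟨lt_of_lt_of_le ha1 hx.1, lt_trans hx.2 htT⟩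
        have hx1 : (1:ℝ) ≤ x := hx'.1.le
        have hx0 : (0:ℝ) < x := by linarith
        have hρx := hρpos x hx1
        have hvx : v x = ρ x := by
          have h2 : (v x)^2 = (ρ x)^2 := heq
          nlinarith [hv0 x]
        have hP : 0 < x ^ ((1:ℝ) + μ) := Real.rpow_pos_of_pos hx0 _
        calc g x ≤ (2 * A / x) * (v x)^2 + (B / x ^ ((1:ℝ) + μ)) * v x := hg x hx'
          _ < (2 * A / x) * (ρ x)^2 + ((B + ε) / x ^ ((1:ℝ) + μ)) * ρ x := by
              rw [hvx]
              have hd : B / x ^ ((1:ℝ) + μ) < (B + ε) / x ^ ((1:ℝ) + μ) := by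
                gcongr
                linarith
              nlinarith [mul_lt_mul_of_pos_right hd hρx]
          _ = 2 * ρ x * P x := hode x hx0
    have hfin : u t ≤ (ρ t)^2 := hstep ⟨hat.le, le_refl t⟩
    have hvt : v t ≤ ρ t := by
      have hρt := hρpos t (by linarith)
      have hfin' : (v t)^2 ≤ (ρ t)^2 := hfin
      nlinarith [hv0 t, hfin']
    have hle : ρ t ≤ (c + k) * t ^ A := by
      have h3 : 0 < t ^ (-μ) := Real.rpow_pos_of_pos htpos _
      simp only [hρdef]
      nlinarith
    calc v t ≤ ρ t := hvt
      _ ≤ (c + k) * t ^ A := hle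
      _ = (v 1 + ε + (B + ε) / (2 * (μ + A))) * t ^ A := by rw [hcdef, hkdef]
  -- take ε → 0
  refine le_of_forall_pos_le_add ?_
  intro δ hδ
  have hd : 0 < (1 + 1 / (2 * (μ + A))) * t ^ A := by positivity
  set ε := δ / ((1 + 1 / (2 * (μ + A))) * t ^ A) with hεdef
  have hε : 0 < ε := by positivity
  have hkey := key ε hε
  have hexp : (v 1 + ε + (B + ε) / (2 * (μ + A))) * t ^ A
      = (v 1 + B / (2 * (μ + A))) * t ^ A + ε * ((1 + 1 / (2 * (μ + A))) * t ^ A) := by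
    field_simp
    ring
  have hεδ : ε * ((1 + 1 / (2 * (μ + A))) * t ^ A) = δ := by
    rw [hεdef]; field_simp
  rw [hexp, hεδ] at hkey
  exact hkey
end
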